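/- Let H be a complex Hilbert space, R, K bounded operators on H with ‖R‖ < 1 and K compact, and set F := Id + R + K. Let Q₁,…,Q_κ be bounded operators on H, each commuting with F. Then there exists ε > 0 such that for every λ = (λ₁,…,λ_κ) ∈ ℂ^κ with Σ_j |λ_j| < ε, every u ∈ H with (F + Σ_{j=1}^κ λ_j Q_j) u = 0 lies in the generalized kernel of F, i.e. Fⁿ u = 0 for some n ∈ ℕ. -/

import Mathlib

open Metric Submodule Finset ContinuousLinearMap

section Auxiliary

variable {H : Type*} [NormedAddCommGroup H] [InnerProductSpace ℂ H] [CompleteSpace H]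


/-- A closed subspace on which a compact operator is bounded below is finite dimensional. -/
lemma aux_findim_of_boundedBelow (K : H →L[ℂ] H) (hK : IsCompactOperator ⇑K)
    (Z : Submodule ℂ H) (hZc : IsClosed (Z : Set H)) {c : ℝ} (hc : 0 < c)
    (hb : ∀ z ∈ Z, c * ‖z‖ ≤ ‖K z‖) : FiniteDimensional ℂ Z := by
  obtain ⟨𝒦, h𝒦, hnhds⟩ := hK
  obtain ⟨ε, εpos, hball⟩ := Metric.mem_nhds_iff.1 hnhds
  have hKmem : ∀ x : H, ‖x‖ < ε → K x ∈ 𝒦 := by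
    intro x hx
    exact hball (by simpa [mem_ball, dist_eq_norm] using hx)
  -- sequential compactness of the closed unit ball of Z
  have hseq : IsSeqCompact (Metric.closedBall (0 : Z) 1) := by
    intro x hx
    -- scaled sequence
    set y : ℕ → H := fun n => (ε / 2 : ℝ) • ((x n : H)) with hy
    have hxn : ∀ n, ‖(x n : H)‖ ≤ 1 := by
      intro n
      have := hx n
      simpa [Metric.mem_closedBall, dist_eq_norm] using this
    have hyn : ∀ n, ‖y n‖ < ε := by
      intro n
      have h1 : ‖y n‖ = (ε / 2) * ‖(x n : H)‖ := by
        rw [hy]; rw [norm_smul, Real.norm_eq_abs, abs_of_pos (by linarith : (0:ℝ) < ε/2)]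
      nlinarith [hxn n, norm_nonneg ((x n : H))]
    have hKy : ∀ n, K (y n) ∈ 𝒦 := fun n => hKmem _ (hyn n)
    obtain ⟨L, _, φ, hφmono, hφtend⟩ := h𝒦.isSeqCompact hKy
    have hcauchyK : CauchySeq (fun n => K (y (φ n))) := hφtend.cauchySeq
    -- the original subsequence is Cauchy
    have hcauchy : CauchySeq (fun n => (x (φ n) : H)) := by
      rw [Metric.cauchySeq_iff] at hcauchyK ⊢
      intro δ δpos
      have δ'pos : 0 < δ * (c * (ε / 2)) := by positivity
      obtain ⟨N, hN⟩ := hcauchyK (δ * (c * (ε / 2))) δ'pos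
      refine ⟨N, fun m hm n hn => ?_⟩
      have h2 := hN m hm n hn
      rw [dist_eq_norm] at h2 ⊢
      have hmem : ((x (φ m) : H) - (x (φ n) : H)) ∈ Z := Z.sub_mem (x (φ m)).2 (x (φ n)).2
      have h3 := hb _ hmem
      have h4 : K (y (φ m)) - K (y (φ n)) = (ε / 2 : ℝ) • (K ((x (φ m) : H) - (x (φ n) : H))) := by
        simp [hy, map_sub, map_smul, smul_sub]
      rw [h4, norm_smul, Real.norm_eq_abs, abs_of_pos (by linarith : (0:ℝ) < ε/2)] at h2
      have h6 : ‖K ((x (φ m) : H) - (x (φ n) : H))‖ < δ * c := by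
        have hε2 : (0:ℝ) < ε / 2 := by linarith
        calc ‖K ((x (φ m) : H) - (x (φ n) : H))‖
            = (ε/2 * ‖K ((x (φ m) : H) - (x (φ n) : H))‖) / (ε/2) := by field_simp
          _ < (δ * (c * (ε/2))) / (ε/2) := (div_lt_div_iff_of_pos_right hε2).2 h2
          _ = δ * c := by field_simp
      have h7 : c * ‖(x (φ m) : H) - (x (φ n) : H)‖ < c * δ := by
        calc c * ‖(x (φ m) : H) - (x (φ n) : H)‖ ≤ ‖K ((x (φ m) : H) - (x (φ n) : H))‖ := h3
          _ < δ * c := h6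
          _ = c * δ := mul_comm _ _
      exact lt_of_mul_lt_mul_left h7 hc.le
    obtain ⟨w, hw⟩ := cauchySeq_tendsto_of_complete hcauchy
    have hwZ : w ∈ Z := hZc.mem_of_tendsto hw (Filter.Eventually.of_forall fun n => (x (φ n)).2)
    have hwball : (⟨w, hwZ⟩ : Z) ∈ Metric.closedBall (0 : Z) 1 := by
      rw [Metric.mem_closedBall, dist_zero_right]
      have : Filter.Tendsto (fun n => ‖(x (φ n) : H)‖) Filter.atTop (nhds ‖w‖) :=
        (continuous_norm.tendsto _).comp hw
      exact le_of_tendsto this (Filter.Eventually.of_forall fun n => hxn (φ n))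
    refine ⟨⟨w, hwZ⟩, hwball, φ, hφmono, ?_⟩
    exact tendsto_subtype_rng.2 hw
  have hcomp : IsCompact (Metric.closedBall (0 : Z) 1) := hseq.isCompact
  exact FiniteDimensional.of_isCompact_closedBall₀ ℂ zero_lt_one hcomp

local notation "⟪" x ", " y "⟫" => @inner ℂ _ _ x y

/-- Finite-rank approximation of a compact operator on a Hilbert space. -/
lemma aux_finrank_approx (K : H →L[ℂ] H) (hK : IsCompactOperator ⇑K) {δ : ℝ} (hδ : 0 < δ) :
    ∃ (n : ℕ) (b : Fin n → H) (φ : Fin n → (H →L[ℂ] ℂ)),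
      Orthonormal ℂ b ∧ ‖K - ∑ i, (φ i).smulRight (b i)‖ ≤ δ := by
  obtain ⟨𝒦, h𝒦, hnhds⟩ := hK
  obtain ⟨ε, εpos, hball⟩ := Metric.mem_nhds_iff.1 hnhds
  have hKmem : ∀ x : H, ‖x‖ < ε → K x ∈ 𝒦 := fun x hx =>
    hball (by simpa [mem_ball, dist_eq_norm] using hx)
  -- finite net of 𝒦 at scale δ*ε/2
  have hη : (0:ℝ) < δ * ε / 2 := by positivity
  obtain ⟨t, htfin, htsub⟩ := (Metric.totallyBounded_iff.1 h𝒦.totallyBounded) (δ * ε / 2) hη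
  set V : Submodule ℂ H := Submodule.span ℂ t with hV
  haveI : FiniteDimensional ℂ V := FiniteDimensional.span_of_finite ℂ htfin
  haveI : CompleteSpace V := FiniteDimensional.complete ℂ V
  set n : ℕ := Module.finrank ℂ V
  set o : OrthonormalBasis (Fin n) ℂ V := stdOrthonormalBasis ℂ V
  refine ⟨n, fun i => (o i : H), fun i => (innerSL ℂ ((o i : H))).comp K, ?_, ?_⟩
  · -- orthonormality of the coerced basis
    have ho := o.orthonormal
    constructor
    · intro i
      exact ho.1 i
    · intro i j hij
      simpa [Submodule.coe_inner] using ho.2 hij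
  · -- norm bound
    have hsum : ∀ x : H,
        (∑ i, ((innerSL ℂ ((o i : H))).comp K).smulRight ((o i : H))) x
          = ((orthogonalProjection V (K x) : V) : H) := by
      intro x
      have h1 : ∀ i, ⟪(o i : H), K x⟫ = ⟪(o i : H), ((orthogonalProjection V (K x) : V) : H)⟫ := by
        intro i
        have h2 : ⟪(o i : H), K x - ((orthogonalProjection V (K x) : V) : H)⟫ = 0 := by
          have h3 := Submodule.starProjection_inner_eq_zero (K := V) (K x) (o i : H) (o i).2
          exact inner_eq_zero_symm.mp h3
        have h6 := inner_sub_right (𝕜 := ℂ) ((o i : H)) (K x) (((orthogonalProjection V (K x) : V) : H))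
        rw [h2] at h6
        exact sub_eq_zero.mp h6.symm
      calc (∑ i, ((innerSL ℂ ((o i : H))).comp K).smulRight ((o i : H))) x
          = ∑ i, ⟪(o i : H), K x⟫ • (o i : H) := by
            simp [ContinuousLinearMap.sum_apply, ContinuousLinearMap.smulRight_apply]
        _ = ∑ i, (o.repr (orthogonalProjection V (K x)) i) • (o i : H) := by
            refine Finset.sum_congr rfl fun i _ => ?_
            rw [h1 i, o.repr_apply_apply]
            congr 1
        _ = ((∑ i, (o.repr (orthogonalProjection V (K x)) i) • o i : V) : H) := by
            push_cast
            rfl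
        _ = ((orthogonalProjection V (K x) : V) : H) := by rw [o.sum_repr]
    refine ContinuousLinearMap.opNorm_le_bound _ hδ.le fun x => ?_
    rcases eq_or_ne x 0 with rfl | hx0
    · simp
    · have hxpos : (0:ℝ) < ‖x‖ := norm_pos_iff.2 hx0
      -- consider the rescaled vector
      set x' : H := (((ε / 2) * ‖x‖⁻¹ : ℝ) : ℂ) • x with hx'
      have hx'norm : ‖x'‖ = ε / 2 := by
        rw [hx', norm_smul, Complex.norm_real, Real.norm_eq_abs, abs_of_pos (by positivity)]
        field_simp
      have hx'mem : K x' ∈ 𝒦 := hKmem _ (by rw [hx'norm]; linarith)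
      obtain ⟨y, hyt, hydist⟩ := by
        have := htsub hx'mem
        simpa using this
      have hyV : y ∈ V := Submodule.subset_span hyt
      -- distance from K x' to V is at most δ*ε/2
      have hproj : ‖K x' - ((orthogonalProjection V (K x') : V) : H)‖ ≤ δ * ε / 2 := by
        have hmin := Submodule.starProjection_minimal (U := V) (K x')
        have hle : (⨅ v : V, ‖K x' - (v : H)‖) ≤ ‖K x' - y‖ := by
          have hbdd : BddBelow (Set.range fun v : V => ‖K x' - (v : H)‖) := by
            refine ⟨0, ?_⟩
            rintro r ⟨v, rfl⟩
            exact norm_nonneg _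
          exact ciInf_le hbdd ⟨y, hyV⟩
        have : ‖K x' - y‖ ≤ δ * ε / 2 := by
          rw [← dist_eq_norm]
          exact (le_of_lt (by simpa [dist_comm] using hydist))
        calc ‖K x' - ((orthogonalProjection V (K x') : V) : H)‖
            = ⨅ v : V, ‖K x' - (v : H)‖ := hmin
          _ ≤ ‖K x' - y‖ := hle
          _ ≤ δ * ε / 2 := this
      -- rescale back
      have hlin : (K - ∑ i, ((innerSL ℂ ((o i : H))).comp K).smulRight ((o i : H))) x
          = (((2 / ε) * ‖x‖ : ℝ) : ℂ) • ((K - ∑ i, ((innerSL ℂ ((o i : H))).comp K).smulRight ((o i : H))) x') := by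
        rw [hx']
        rw [← map_smul]
        congr 1
        rw [smul_smul]
        have h9 : ((((2 / ε) * ‖x‖ : ℝ)) : ℂ) * (((ε / 2) * ‖x‖⁻¹ : ℝ) : ℂ) = 1 := by
          rw [← Complex.ofReal_mul, ← Complex.ofReal_one]
          congr 1
          field_simp
        rw [h9, one_smul]
      rw [hlin, norm_smul, Complex.norm_real, Real.norm_eq_abs, abs_of_pos (by positivity)]
      have hval : ‖(K - ∑ i, ((innerSL ℂ ((o i : H))).comp K).smulRight ((o i : H))) x'‖ ≤ δ * ε / 2 := by
        rw [ContinuousLinearMap.sub_apply, hsum x']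
        exact hproj
      calc (2 / ε * ‖x‖) * ‖(K - ∑ i, ((innerSL ℂ ((o i : H))).comp K).smulRight ((o i : H))) x'‖
          ≤ (2 / ε * ‖x‖) * (δ * ε / 2) := by
            apply mul_le_mul_of_nonneg_left hval (by positivity)
        _ = δ * ‖x‖ := by field_simp

/-- The operator `1 + R + K` has no nonzero eigenvalues close to `0`. -/
lemma aux_no_small_eigenvalue (R K : H →L[ℂ] H) (hR : ‖R‖ < 1) (hK : IsCompactOperator ⇑K) :
    ∃ ε₀ > (0 : ℝ), ∀ μ : ℂ, μ ≠ 0 → ‖μ‖ < ε₀ →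
      ∀ x : H, (ContinuousLinearMap.id ℂ H + R + K) x = μ • x → x = 0 := by
  classical
  set F : H →L[ℂ] H := ContinuousLinearMap.id ℂ H + R + K with hF
  set s : ℝ := (1 - ‖R‖) / 2 with hs
  have spos : 0 < s := by rw [hs]; linarith
  obtain ⟨n, b, φ, hb, hKf⟩ := aux_finrank_approx K hK spos
  set Kf : H →L[ℂ] H := ∑ i, (φ i).smulRight (b i) with hKfdef
  set K₁ : H →L[ℂ] H := K - Kf with hK₁
  have hRK₁ : ‖R + K₁‖ ≤ (1 + ‖R‖) / 2 := by
    have h1 : ‖R + K₁‖ ≤ ‖R‖ + ‖K₁‖ := norm_add_le _ _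
    have h2 : ‖K₁‖ ≤ s := hKf
    rw [hs] at h2
    linarith
  set U : Set ℂ := {lam : ℂ | lam.re < s} with hU
  set B : ℂ → (H →L[ℂ] H) := fun lam => (1 - lam) • (1 : H →L[ℂ] H) + (R + K₁) with hB
  have hFB : ∀ lam : ℂ, F - lam • (1 : H →L[ℂ] H) = B lam + Kf := by
    intro lam
    rw [hF, hB, hK₁]
    have hid : ContinuousLinearMap.id ℂ H = (1 : H →L[ℂ] H) := rfl
    rw [hid]
    module
  have habs : ∀ lam ∈ U, (1 + ‖R‖) / 2 < ‖1 - lam‖ := by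
    intro lam hlam
    have h1 : (1 - lam).re ≤ ‖1 - lam‖ := Complex.re_le_norm _
    have h2 : (1 - lam).re = 1 - lam.re := by simp
    have h3 : lam.re < s := hlam
    rw [hs] at h3
    linarith
  have h1lam : ∀ lam ∈ U, (1 - lam) ≠ 0 := by
    intro lam hlam h0
    have h4 := habs lam hlam
    rw [h0] at h4
    simp only [norm_zero] at h4
    have : (0:ℝ) ≤ ‖R‖ := norm_nonneg _
    linarith
  have hBunit : ∀ lam ∈ U, IsUnit (B lam) := by
    intro lam hlam
    have hne := h1lam lam hlam
    have hfac : B lam = ((1 - lam) • (1 : H →L[ℂ] H)) *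
        ((1 : H →L[ℂ] H) + (1 - lam)⁻¹ • (R + K₁)) := by
      rw [smul_mul_assoc, one_mul, smul_add, smul_smul, mul_inv_cancel₀ hne, one_smul, hB]
    have hu1 : IsUnit ((1 - lam) • (1 : H →L[ℂ] H)) := by
      have h5 : (1 - lam) • (1 : H →L[ℂ] H) = algebraMap ℂ (H →L[ℂ] H) (1 - lam) := by
        rw [Algebra.algebraMap_eq_smul_one]
      rw [h5]
      exact (IsUnit.mk0 _ hne).map (algebraMap ℂ (H →L[ℂ] H))
    have hu2 : IsUnit ((1 : H →L[ℂ] H) + (1 - lam)⁻¹ • (R + K₁)) := by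
      have hnorm : ‖-((1 - lam)⁻¹ • (R + K₁))‖ < 1 := by
        rw [norm_neg, norm_smul, norm_inv]
        have h5 := habs lam hlam
        have h6 : 0 < ‖1 - lam‖ := by
          have h6a : (0:ℝ) ≤ (1 + ‖R‖)/2 := by positivity
          linarith
        rw [inv_mul_lt_iff₀ h6, mul_one]
        calc ‖R + K₁‖ ≤ (1 + ‖R‖)/2 := hRK₁
          _ < ‖1 - lam‖ := h5
      have h7 := (⟨Units.oneSub _ hnorm, rfl⟩ :
        IsUnit ((1 : H →L[ℂ] H) - -((1 - lam)⁻¹ • (R + K₁))))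
      rwa [sub_neg_eq_add] at h7
    rw [hfac]
    exact hu1.mul hu2
  set G : ℂ → (H →L[ℂ] H) := fun lam => Ring.inverse (B lam) with hG
  have hBG : ∀ lam ∈ U, B lam * G lam = 1 := fun lam hlam =>
    Ring.mul_inverse_cancel _ (hBunit lam hlam)
  have hGB : ∀ lam ∈ U, G lam * B lam = 1 := fun lam hlam =>
    Ring.inverse_mul_cancel _ (hBunit lam hlam)
  have hGBx : ∀ lam ∈ U, ∀ y : H, G lam (B lam y) = y := by
    intro lam hlam y
    rw [← ContinuousLinearMap.mul_apply, hGB lam hlam, ContinuousLinearMap.one_apply]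
  have hBGx : ∀ lam ∈ U, ∀ y : H, B lam (G lam y) = y := by
    intro lam hlam y
    rw [← ContinuousLinearMap.mul_apply, hBG lam hlam, ContinuousLinearMap.one_apply]
  have hGan : ∀ lam₀ ∈ U, AnalyticAt ℂ G lam₀ := by
    intro lam₀ hlam₀
    have hBan : AnalyticAt ℂ B lam₀ :=
      ((analyticAt_const.sub analyticAt_id).smul analyticAt_const).add analyticAt_const
    have h1 : AnalyticAt ℂ Ring.inverse (B lam₀) := by
      have h2 := analyticAt_inverse (𝕜 := ℂ) (hBunit lam₀ hlam₀).unit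
      rwa [IsUnit.unit_spec] at h2
    exact h1.comp hBan
  set A : ℂ → Matrix (Fin n) (Fin n) ℂ := fun lam => Matrix.of fun i j => φ i (G lam (b j)) with hA
  set h : ℂ → ℂ := fun lam => ((1 : Matrix (Fin n) (Fin n) ℂ) + A lam).det with hh
  have hhan : ∀ lam₀ ∈ U, AnalyticAt ℂ h lam₀ := by
    intro lam₀ hlam₀
    have hentry : ∀ i j : Fin n, AnalyticAt ℂ (fun lam => φ i (G lam (b j))) lam₀ := by
      intro i j
      have hL : AnalyticAt ℂ (⇑((φ i).comp (ContinuousLinearMap.apply ℂ H (b j)))) (G lam₀) :=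
        ContinuousLinearMap.analyticAt _ _
      exact hL.comp (hGan lam₀ hlam₀)
    have hexp : h = fun lam => ∑ σ : Equiv.Perm (Fin n),
        ((Equiv.Perm.sign σ : ℤ) : ℂ) * ∏ i, ((1 : Matrix (Fin n) (Fin n) ℂ) + A lam) (σ i) i := by
      funext lam
      show ((1 : Matrix (Fin n) (Fin n) ℂ) + A lam).det = _
      rw [Matrix.det_apply]
      refine Finset.sum_congr rfl fun σ _ => ?_
      rw [Units.smul_def, zsmul_eq_mul]
    rw [hexp]
    apply Finset.analyticAt_fun_sum
    intro σ _
    apply analyticAt_const.mul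
    apply Finset.analyticAt_fun_prod
    intro i _
    have h9 : (fun lam => ((1 : Matrix (Fin n) (Fin n) ℂ) + A lam) (σ i) i)
        = fun lam => (1 : Matrix (Fin n) (Fin n) ℂ) (σ i) i + φ (σ i) (G lam (b i)) := by
      funext lam
      rw [Matrix.add_apply]
      rfl
    rw [h9]
    exact analyticAt_const.add (hentry (σ i) i)
  -- the key equivalence on U
  have hiff : ∀ lam ∈ U, (h lam ≠ 0) ↔ (∀ x : H, F x = lam • x → x = 0) := by
    intro lam hlam
    have hKfx : ∀ x : H, Kf x = ∑ j, (φ j x) • b j := by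
      intro x
      rw [hKfdef]
      simp [ContinuousLinearMap.sum_apply, ContinuousLinearMap.smulRight_apply]
    constructor
    · intro hdet x hx
      have hker : B lam x + Kf x = 0 := by
        have h1 : (F - lam • (1 : H →L[ℂ] H)) x = 0 := by
          simp only [ContinuousLinearMap.sub_apply, ContinuousLinearMap.smul_apply,
            ContinuousLinearMap.one_apply]
          rw [hx]; simp
        rw [hFB lam] at h1
        simpa using h1
      set c : Fin n → ℂ := fun i => φ i x with hc
      have hBx : B lam x = -(∑ j, c j • b j) := by
        have h2 : B lam x + ∑ j, c j • b j = 0 := by rw [← hKfx x]; exact hker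
        exact eq_neg_of_add_eq_zero_left h2
      have hxG : x = -(∑ j, c j • G lam (b j)) := by
        have h3 : x = G lam (B lam x) := (hGBx lam hlam x).symm
        rw [hBx] at h3
        rw [h3, map_neg, map_sum]
        congr 1
        refine Finset.sum_congr rfl fun j _ => ?_
        rw [map_smul]
      have hcv : ((1 : Matrix (Fin n) (Fin n) ℂ) + A lam).mulVec c = 0 := by
        funext i
        rw [Matrix.add_mulVec, Matrix.one_mulVec]
        have h4 : (A lam).mulVec c i = ∑ j, (A lam) i j * c j := by
          simp [Matrix.mulVec, dotProduct]
        have h5 : φ i x = -(∑ j, (A lam) i j * c j) := by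
          rw [hxG, map_neg, map_sum]
          congr 1
          refine Finset.sum_congr rfl fun j _ => ?_
          rw [map_smul, smul_eq_mul, mul_comm]
          rfl
        have h6 : c i = φ i x := rfl
        simp only [Pi.add_apply, Pi.zero_apply, h4]
        rw [h6, h5]
        ring
      have hc0 : c = 0 := by
        by_contra hc0
        have h7 : ((1 : Matrix (Fin n) (Fin n) ℂ) + A lam).det = 0 :=
          Matrix.exists_mulVec_eq_zero_iff.mp ⟨c, hc0, hcv⟩
        exact hdet h7
      have h8 : Kf x = 0 := by
        rw [hKfx x]
        have : ∀ j, (φ j x) • b j = 0 := by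
          intro j
          have : φ j x = c j := rfl
          rw [this, hc0]
          simp
        simp [this]
      have h9 : B lam x = 0 := by
        have := hker
        rw [h8, add_zero] at this
        exact this
      calc x = G lam (B lam x) := (hGBx lam hlam x).symm
        _ = G lam 0 := by rw [h9]
        _ = 0 := map_zero _
    · intro hinj hdet0
      obtain ⟨c, hc0, hcv⟩ := Matrix.exists_mulVec_eq_zero_iff.mpr hdet0
      set w : H := ∑ j, c j • b j with hw
      set x : H := -(G lam w) with hx
      have hBx : B lam x = -w := by
        rw [hx, map_neg, hBGx lam hlam w]
      have hAc : ∀ i, ∑ j, (A lam) i j * c j = -(c i) := by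
        intro i
        have h4 := congrFun hcv i
        rw [Matrix.add_mulVec, Matrix.one_mulVec] at h4
        have h5 : (A lam).mulVec c i = ∑ j, (A lam) i j * c j := by
          simp [Matrix.mulVec, dotProduct]
        simp only [Pi.add_apply, Pi.zero_apply, h5] at h4
        linear_combination h4
      have hφx : ∀ i, φ i x = c i := by
        intro i
        have h6 : φ i x = -(∑ j, c j * φ i (G lam (b j))) := by
          rw [hx, hw]
          simp only [map_neg, map_sum, map_smul, smul_eq_mul]
        rw [h6]
        have h7 : ∑ j, c j * φ i (G lam (b j)) = ∑ j, (A lam) i j * c j := by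
          refine Finset.sum_congr rfl fun j _ => ?_
          rw [mul_comm]
          rfl
        rw [h7, hAc i, neg_neg]
      have hker : (F - lam • (1 : H →L[ℂ] H)) x = 0 := by
        rw [hFB lam]
        have h8 : Kf x = w := by
          rw [hKfx x, hw]
          refine Finset.sum_congr rfl fun j _ => ?_
          rw [hφx j]
        simp only [ContinuousLinearMap.add_apply]
        rw [hBx, h8]
        simp
      have hFx : F x = lam • x := by
        have h9 : F x - lam • x = 0 := by
          simpa [ContinuousLinearMap.sub_apply, ContinuousLinearMap.smul_apply,
            ContinuousLinearMap.one_apply] using hker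
        rw [sub_eq_zero] at h9
        exact h9
      have hx0 : x ≠ 0 := by
        intro hx0
        have h10 : B lam x = 0 := by rw [hx0, map_zero]
        rw [hBx] at h10
        have h11 : w = 0 := by
          have := neg_eq_zero.mp h10.symm.symm
          simpa using h10
        have h12 : ∀ i, c i = 0 := by
          have hli := hb.linearIndependent
          rw [Fintype.linearIndependent_iff] at hli
          exact hli c (by rw [← hw]; exact h11)
        exact hc0 (funext h12)
      exact hx0 (hinj x hFx)
  -- endgame
  have h0U : (0 : ℂ) ∈ U := by
    show (0:ℂ).re < s
    simpa using spos
  set lamstar : ℂ := ((-(‖F‖ + 1) : ℝ) : ℂ) with hlamstar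
  have hstarU : lamstar ∈ U := by
    show lamstar.re < s
    rw [hlamstar]
    have h1 : (0:ℝ) ≤ ‖F‖ := norm_nonneg _
    simp only [Complex.ofReal_re]
    linarith
  have hstarinj : ∀ x : H, F x = lamstar • x → x = 0 := by
    intro x hx
    by_contra hx0
    have h1 : ‖F x‖ ≤ ‖F‖ * ‖x‖ := F.le_opNorm x
    have h2 : ‖lamstar • x‖ = (‖F‖ + 1) * ‖x‖ := by
      rw [norm_smul, hlamstar, Complex.norm_real, Real.norm_eq_abs, abs_neg,
        abs_of_pos (by positivity : (0:ℝ) < ‖F‖ + 1)]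
    rw [hx, h2] at h1
    have h3 : 0 < ‖x‖ := norm_pos_iff.2 hx0
    nlinarith
  have hhstar : h lamstar ≠ 0 := (hiff lamstar hstarU).mpr hstarinj
  rcases (hhan 0 h0U).eventually_eq_zero_or_eventually_ne_zero with hcase | hcase
  · exfalso
    have hAnOn : AnalyticOnNhd ℂ h U := fun z hz => hhan z hz
    have hconn : IsPreconnected U := (convex_halfSpace_re_lt s).isPreconnected
    have hEq := hAnOn.eqOn_zero_of_preconnected_of_eventuallyEq_zero hconn h0U hcase
    exact hhstar (hEq hstarU)
  · rw [eventually_nhdsWithin_iff] at hcase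
    rw [Metric.eventually_nhds_iff] at hcase
    obtain ⟨ε₁, ε₁pos, hε₁⟩ := hcase
    refine ⟨min ε₁ s, lt_min ε₁pos spos, ?_⟩
    intro μ hμ0 hμabs x hx
    have hμU : μ ∈ U := by
      show μ.re < s
      calc μ.re ≤ ‖μ‖ := Complex.re_le_norm μ
        _ < min ε₁ s := hμabs
        _ ≤ s := min_le_right _ _
    have hμdist : dist μ 0 < ε₁ := by
      rw [Complex.dist_eq, sub_zero]
      exact lt_of_lt_of_le hμabs (min_le_left _ _)
    have hμh : h μ ≠ 0 := hε₁ hμdist (by simpa using hμ0)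
    exact (hiff μ hμU).mp hμh x hx

end Auxiliary

/-- Let `H` be a complex Hilbert space, `R, K` bounded with `‖R‖ < 1`
and `K` compact, and `F := Id + R + K`.  Let `Q₁,…,Q_κ` be bounded operators commuting
with `F`.  Then there is `ε > 0` such that for every `λ ∈ ℂ^κ` with `Σ_j |λ_j| < ε`,
every `u ∈ H` with `(F + Σ_j λ_j Q_j) u = 0` lies in the generalized kernel of `F`,
i.e. `Fⁿ u = 0` for some `n`. -/
theorem mem_generalized_kernel_of_small_perturbation
    {H : Type*} [NormedAddCommGroup H] [InnerProductSpace ℂ H] [CompleteSpace H]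
    (R K : H →L[ℂ] H) (hR : ‖R‖ < 1) (hK : IsCompactOperator ⇑K)
    {κ : ℕ} (Q : Fin κ → (H →L[ℂ] H))
    (hQ : ∀ j, (Q j).comp (ContinuousLinearMap.id ℂ H + R + K)
      = (ContinuousLinearMap.id ℂ H + R + K).comp (Q j)) :
    ∃ ε > (0 : ℝ), ∀ lam : Fin κ → ℂ, (∑ j, ‖lam j‖) < ε →
      ∀ u : H, ((ContinuousLinearMap.id ℂ H + R + K) + ∑ j, lam j • Q j) u = 0 →
        ∃ n : ℕ, ((ContinuousLinearMap.id ℂ H + R + K) ^ n) u = 0 := by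
  classical
  obtain ⟨ε₀, hε₀, hkey⟩ := aux_no_small_eigenvalue R K hR hK
  set Fop : H →L[ℂ] H := ContinuousLinearMap.id ℂ H + R + K with hFop
  set CQ : ℝ := 1 + ∑ j, ‖Q j‖ with hCQ
  have hCQpos : 0 < CQ := by
    rw [hCQ]
    have : (0:ℝ) ≤ ∑ j, ‖Q j‖ := Finset.sum_nonneg fun j _ => norm_nonneg _
    linarith
  have hQle : ∀ j, ‖Q j‖ ≤ CQ := by
    intro j
    rw [hCQ]
    have h1 : ‖Q j‖ ≤ ∑ i, ‖Q i‖ :=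
      Finset.single_le_sum (fun i _ => norm_nonneg (Q i)) (Finset.mem_univ j)
    linarith
  set εm : ℝ := min ε₀ ((1 - ‖R‖) / 2) with hεm
  have hεmpos : 0 < εm := lt_min hε₀ (by linarith)
  refine ⟨εm / CQ, div_pos hεmpos hCQpos, ?_⟩
  intro lam hlam u hu
  set Pop : H →L[ℂ] H := ∑ j, lam j • Q j with hPop
  -- norm bound on Pop
  have hPnorm : ‖Pop‖ < εm := by
    have h1 : ‖Pop‖ ≤ ∑ j, ‖lam j • Q j‖ := norm_sum_le _ _
    have h2 : ∀ j, ‖lam j • Q j‖ ≤ ‖lam j‖ * CQ := by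
      intro j
      rw [norm_smul]
      exact mul_le_mul_of_nonneg_left (hQle j) (norm_nonneg _)
    have h3 : ‖Pop‖ ≤ (∑ j, ‖lam j‖) * CQ := by
      calc ‖Pop‖ ≤ ∑ j, ‖lam j • Q j‖ := h1
        _ ≤ ∑ j, ‖lam j‖ * CQ := Finset.sum_le_sum fun j _ => h2 j
        _ = (∑ j, ‖lam j‖) * CQ := by rw [Finset.sum_mul]
    have h4 : (∑ j, ‖lam j‖) * CQ < (εm / CQ) * CQ :=
      mul_lt_mul_of_pos_right hlam hCQpos
    rw [div_mul_cancel₀ _ (ne_of_gt hCQpos)] at h4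
    linarith
  -- commutation of Fop and Pop
  have hFP : ∀ x : H, Fop (Pop x) = Pop (Fop x) := by
    intro x
    rw [hPop]
    simp only [ContinuousLinearMap.sum_apply, ContinuousLinearMap.smul_apply, map_sum, map_smul]
    refine Finset.sum_congr rfl fun j _ => ?_
    congr 1
    have := congrArg (fun T : H →L[ℂ] H => T x) (hQ j)
    simpa [ContinuousLinearMap.comp_apply] using this.symm
  -- the orbit subspace
  set Zs : Submodule ℂ H := Submodule.span ℂ (Set.range fun i : ℕ => (Fop ^ i) u) with hZs
  set Z : Submodule ℂ H := Zs.topologicalClosure with hZ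
  have hZclosed : IsClosed (Z : Set H) := Zs.isClosed_topologicalClosure
  have huZ : u ∈ Z := by
    apply Zs.le_topologicalClosure
    apply Submodule.subset_span
    exact ⟨0, by simp⟩
  -- orbit is in the kernel of Fop + Pop
  have horb : ∀ i : ℕ, (Fop + Pop) ((Fop ^ i) u) = 0 := by
    intro i
    induction i with
    | zero => simpa using hu
    | succ i ih =>
      have h1 : (Fop ^ (i + 1)) u = Fop ((Fop ^ i) u) := by
        rw [pow_succ']
        rfl
      rw [h1]
      have h2 : (Fop + Pop) (Fop ((Fop ^ i) u)) = Fop ((Fop + Pop) ((Fop ^ i) u)) := by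
        simp only [ContinuousLinearMap.add_apply, map_add]
        rw [hFP]
      rw [h2, ih, map_zero]
  have hZker : Z ≤ LinearMap.ker ((Fop + Pop : H →L[ℂ] H) : H →ₗ[ℂ] H) := by
    rw [hZ]
    apply Submodule.topologicalClosure_minimal
    · rw [hZs]
      rw [Submodule.span_le]
      rintro x ⟨i, rfl⟩
      exact horb i
    · exact ContinuousLinearMap.isClosed_ker (Fop + Pop)
  have hFz : ∀ z ∈ Z, Fop z = -(Pop z) := by
    intro z hz
    have h1 : (Fop + Pop) z = 0 := hZker hz
    have h2 : Fop z + Pop z = 0 := by simpa using h1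
    exact eq_neg_of_add_eq_zero_left h2
  -- Fop maps Z to Z
  have hFmapsZs : ∀ z ∈ Zs, Fop z ∈ Zs := by
    intro z hz
    rw [hZs] at hz ⊢
    induction hz using Submodule.span_induction with
    | mem x hx =>
      obtain ⟨i, rfl⟩ := hx
      apply Submodule.subset_span
      refine ⟨i + 1, ?_⟩
      show (Fop ^ (i + 1)) u = Fop ((Fop ^ i) u)
      rw [pow_succ']
      rfl
    | zero => simpa using Submodule.zero_mem _
    | add x y hx hy ihx ihy => rw [map_add]; exact Submodule.add_mem _ ihx ihy
    | smul a x hx ihx => rw [map_smul]; exact Submodule.smul_mem _ a ihx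
  have hFmaps : ∀ z ∈ Z, Fop z ∈ Z := by
    intro z hz
    have h1 : (z : H) ∈ closure (Zs : Set H) := by
      rw [hZ] at hz
      exact hz
    have h2 : Fop z ∈ closure (Zs : Set H) :=
      map_mem_closure Fop.continuous h1 hFmapsZs
    exact h2
  -- K is bounded below on Z
  have hc2 : (0:ℝ) < (1 - ‖R‖) / 2 := by linarith
  have hlow : ∀ z ∈ Z, ((1 - ‖R‖) / 2) * ‖z‖ ≤ ‖K z‖ := by
    intro z hz
    have h1 : Fop z = z + R z + K z := by
      rw [hFop]
      simp [ContinuousLinearMap.add_apply]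
    have hthis : z + R z + K z = -(Pop z) := by
      rw [← h1]
      exact hFz z hz
    have h3 : ‖z‖ ≤ ‖K z‖ + ‖Pop z‖ + ‖R z‖ := by
      have h4 : z = -(Pop z) - R z - K z := by
        rw [← hthis]
        abel
      calc ‖z‖ = ‖-(Pop z) - R z - K z‖ := by rw [← h4]
        _ ≤ ‖-(Pop z) - R z‖ + ‖K z‖ := norm_sub_le _ _
        _ ≤ ‖-(Pop z)‖ + ‖R z‖ + ‖K z‖ := by
            have := norm_sub_le (-(Pop z)) (R z)
            linarith
        _ = ‖Pop z‖ + ‖R z‖ + ‖K z‖ := by rw [norm_neg]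
        _ = ‖K z‖ + ‖Pop z‖ + ‖R z‖ := by ring
    have h5 : ‖Pop z‖ ≤ ((1 - ‖R‖) / 2) * ‖z‖ := by
      have h6 : ‖Pop z‖ ≤ ‖Pop‖ * ‖z‖ := Pop.le_opNorm z
      have h7 : ‖Pop‖ ≤ (1 - ‖R‖) / 2 := by
        have := hPnorm
        rw [hεm] at this
        have := min_le_right ε₀ ((1 - ‖R‖) / 2)
        linarith [hPnorm, min_le_right ε₀ ((1 - ‖R‖) / 2)]
      calc ‖Pop z‖ ≤ ‖Pop‖ * ‖z‖ := h6
        _ ≤ ((1 - ‖R‖) / 2) * ‖z‖ := mul_le_mul_of_nonneg_right h7 (norm_nonneg _)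
    have h8 : ‖R z‖ ≤ ‖R‖ * ‖z‖ := R.le_opNorm z
    nlinarith [norm_nonneg z]
  haveI hfd : FiniteDimensional ℂ Z :=
    aux_findim_of_boundedBelow K hK Z hZclosed hc2 hlow
  -- the restricted endomorphism
  set f : Z →ₗ[ℂ] Z := (Fop : H →ₗ[ℂ] H).restrict (p := Z) (q := Z) hFmaps with hf
  have hfval : ∀ (z : Z), ((f z : Z) : H) = Fop (z : H) := by
    intro z
    rfl
  -- all eigenvalues of f vanish
  have heig : ∀ μ : ℂ, Module.End.HasEigenvalue f μ → μ = 0 := by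
    intro μ hμ
    by_contra hμ0
    obtain ⟨z, hev⟩ := hμ.exists_hasEigenvector
    have hz0 : z ≠ 0 := hev.2
    have h1 : Fop (z : H) = μ • (z : H) := by
      have h2 : f z = μ • z := hev.apply_eq_smul
      have h3 := congrArg (fun w : Z => (w : H)) h2
      simpa [hfval] using h3
    have hzH0 : (z : H) ≠ 0 := fun hc => hz0 (Subtype.ext hc)
    -- |μ| ≤ ‖Pop‖ < ε₀
    have h4 : Fop (z : H) = -(Pop (z : H)) := hFz (z : H) z.2
    have h5 : ‖μ • (z : H)‖ ≤ ‖Pop‖ * ‖(z : H)‖ := by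
      rw [← h1, h4, norm_neg]
      exact Pop.le_opNorm _
    rw [norm_smul] at h5
    have h6 : 0 < ‖(z : H)‖ := norm_pos_iff.2 hzH0
    have h7 : ‖μ‖ ≤ ‖Pop‖ := by
      by_contra h8
      push_neg at h8
      nlinarith
    have h9 : ‖μ‖ < ε₀ := by
      have := hPnorm
      rw [hεm] at this
      have := min_le_left ε₀ ((1 - ‖R‖) / 2)
      linarith [hPnorm, min_le_left ε₀ ((1 - ‖R‖) / 2)]
    exact hzH0 (hkey μ hμ0 h9 (z : H) h1)
  -- f is nilpotent via its minimal polynomial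
  have hint : IsIntegral ℂ f := LinearMap.isIntegral f
  set p : Polynomial ℂ := minpoly ℂ f with hp
  have hmonic : p.Monic := minpoly.monic hint
  have hsplits : p.Splits := IsAlgClosed.splits p
  have hroots : ∀ r ∈ p.roots, r = 0 := by
    intro r hr
    have h1 : p.IsRoot r := (Polynomial.mem_roots'.mp hr).2
    have h2 : Module.End.HasEigenvalue f r := Module.End.hasEigenvalue_iff_isRoot.mpr h1
    exact heig r h2
  have hpX : p = Polynomial.X ^ p.roots.card := by
    have h1 := hsplits.eq_prod_roots_of_monic hmonic
    conv_lhs => rw [h1]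
    have h2 : p.roots.map (fun a => Polynomial.X - Polynomial.C a)
        = p.roots.map (fun _ => Polynomial.X) := by
      apply Multiset.map_congr rfl
      intro r hr
      rw [hroots r hr]
      simp
    rw [h2, Multiset.map_const', Multiset.prod_replicate]
  have hfnil : f ^ p.roots.card = 0 := by
    have h1 := minpoly.aeval ℂ f
    rw [← hp, hpX, map_pow, Polynomial.aeval_X] at h1
    exact h1
  -- transfer back to H
  have htrans : ∀ (i : ℕ) (z : Z), (Fop ^ i) (z : H) = ((f ^ i) z : H) := by
    intro i
    induction i with
    | zero => intro z; simp
    | succ i ih =>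
      intro z
      have h1 : (Fop ^ (i+1)) (z : H) = (Fop ^ i) (Fop (z : H)) := by
        rw [pow_succ]
        rfl
      have h2 : (f ^ (i+1)) z = (f ^ i) (f z) := by
        rw [pow_succ]
        rfl
      rw [h1, h2]
      have h3 : Fop (z : H) = ((f z : Z) : H) := (hfval z).symm
      rw [h3]
      exact ih (f z)
  refine ⟨p.roots.card, ?_⟩
  have h1 := htrans p.roots.card ⟨u, huZ⟩
  rw [hfnil] at h1
  simpa using h1
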